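/- arXiv:1710.03728 — 4 statements merged into one kernel-verified Lean document; each statement's English description precedes it below -/
import Mathlib

section
/- Let f be a holomorphic function on a bounded open neighborhood U of 0 in ℂ with f(0) = 0, such that for every z ∈ U the full forward orbit f^n(z) stays in U and converges to 0. Then the derivative λ = f'(0) satisfies |λ| < 1. -/
open Filter Metric Set MeasureTheory intervalIntegral Complex

/-- If `f` is holomorphic on a bounded open neighborhood `U` of `0` in `ℂ`, fixes `0`,
maps `U` into itself, and every forward orbit of a point of `U` converges to `0`,
then the multiplier `λ = f'(0)` satisfies `|λ| < 1`. -/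
theorem stmt0 (U : Set ℂ) (hUopen : IsOpen U) (hUbdd : Bornology.IsBounded U)
    (h0U : (0 : ℂ) ∈ U) (f : ℂ → ℂ) (hf : DifferentiableOn ℂ f U)
    (hf0 : f 0 = 0) (hmaps : Set.MapsTo f U U)
    (hconv : ∀ z ∈ U, Filter.Tendsto (fun n => f^[n] z) Filter.atTop (nhds 0)) :
    ‖deriv f 0‖ < 1 := by
  -- choose a closed ball inside U
  obtain ⟨r, hr0, hrU⟩ : ∃ r > 0, closedBall (0 : ℂ) r ⊆ U :=
    (Metric.nhds_basis_closedBall.mem_iff.1 (hUopen.mem_nhds h0U)).imp fun r h => ⟨h.1, h.2⟩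
  -- bound for U
  obtain ⟨M, hM⟩ := hUbdd.subset_closedBall 0
  -- iterates
  set g : ℕ → ℂ → ℂ := fun n => f^[n] with hg
  have hgmaps : ∀ n, Set.MapsTo (g n) U U := fun n => hmaps.iterate n
  have hgdiff : ∀ n, DifferentiableOn ℂ (g n) U := by
    intro n
    induction n with
    | zero => exact differentiableOn_id
    | succ k ih =>
      have : g (k+1) = f ∘ g k := by
        funext z; simp [hg, Function.iterate_succ_apply']
      rw [this]
      exact hf.comp ih (hgmaps k)
  -- the derivative of the iterate
  have hfd : HasDerivAt f (deriv f 0) 0 :=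
    (hf.differentiableAt (hUopen.mem_nhds h0U)).hasDerivAt
  have hderiv : ∀ n, deriv (g n) 0 = (deriv f 0) ^ n := fun n =>
    (HasDerivAt.iterate 0 hfd hf0 n).deriv
  -- power series representation on the ball of radius r
  set rn : NNReal := ⟨r, hr0.le⟩ with hrn
  have hrn0 : 0 < rn := by exact_mod_cast hr0
  have hps : ∀ n, HasFPowerSeriesOnBall (g n) (cauchyPowerSeries (g n) 0 rn) 0 rn := by
    intro n
    exact DifferentiableOn.hasFPowerSeriesOnBall ((hgdiff n).mono hrU) hrn0
  have hcoeff : ∀ n, (deriv f 0) ^ n =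
      (2 * Real.pi * Complex.I : ℂ)⁻¹ •
        ∮ z in C(0, (rn : ℝ)), ((1 : ℂ) / (z - 0)) ^ 1 • (z - 0)⁻¹ • g n z := by
    intro n
    rw [← cauchyPowerSeries_apply (g n) 0 rn 1 1, ← hderiv n,
      (hps n).hasFPowerSeriesAt.deriv]
  -- the circle integral tends to 0 by dominated convergence
  have habs : ∀ θ : ℝ, ‖circleMap 0 r θ‖ = r := by
    intro θ; rw [norm_circleMap_zero]; exact _root_.abs_of_pos hr0
  have hne : ∀ θ : ℝ, circleMap 0 r θ ≠ 0 := by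
    intro θ h
    have := habs θ; rw [h] at this; simp at this; exact hr0.ne' this.symm
  have hmem : ∀ θ : ℝ, circleMap 0 r θ ∈ U := by
    intro θ
    exact hrU (by simp [Metric.mem_closedBall, ← Complex.dist_eq, Complex.dist_eq,
      habs θ, _root_.abs_of_pos hr0])
  set F : ℕ → ℝ → ℂ := fun n θ =>
    deriv (circleMap 0 r) θ •
      (((1 : ℂ) / (circleMap 0 r θ - 0)) ^ 1 • (circleMap 0 r θ - 0)⁻¹ • g n (circleMap 0 r θ))
    with hF
  have hFcont : ∀ n, Continuous (F n) := by
    intro n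
    have hgc : Continuous fun θ => g n (circleMap 0 r θ) := by
      rw [continuous_iff_continuousAt]
      intro θ
      exact (((hgdiff n).differentiableAt (hUopen.mem_nhds (hmem θ))).continuousAt).comp
        (continuous_circleMap 0 r).continuousAt
    have h1 : Continuous fun θ => circleMap 0 r θ := continuous_circleMap 0 r
    have h2 : Continuous fun θ => (circleMap 0 r θ)⁻¹ := h1.inv₀ hne
    simp only [hF, deriv_circleMap, sub_zero, pow_one, one_div, smul_eq_mul]
    exact (h1.mul continuous_const).mul (h2.mul (h2.mul hgc))
  have hFbound : ∀ n, ∀ θ : ℝ, ‖F n θ‖ ≤ M / r := by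
    intro n θ
    have hgM : ‖g n (circleMap 0 r θ)‖ ≤ M := by
      have := hM (hgmaps n (hmem θ))
      simpa [Metric.mem_closedBall, Complex.dist_eq] using this
    have : ‖F n θ‖ = r * (r⁻¹ * (r⁻¹ * ‖g n (circleMap 0 r θ)‖)) := by
      simp [hF, deriv_circleMap, norm_smul, habs θ, _root_.abs_of_pos hr0,
        map_inv₀, map_mul]
    rw [this]
    have hr' : (0:ℝ) < r⁻¹ := by positivity
    calc r * (r⁻¹ * (r⁻¹ * ‖g n (circleMap 0 r θ)‖))
        ≤ r * (r⁻¹ * (r⁻¹ * M)) := by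
          have h1 : r⁻¹ * ‖g n (circleMap 0 r θ)‖ ≤ r⁻¹ * M :=
            mul_le_mul_of_nonneg_left hgM hr'.le
          nlinarith [mul_le_mul_of_nonneg_left h1 hr'.le]
      _ = M / r := by field_simp
  have hFlim : ∀ θ : ℝ, Tendsto (fun n => F n θ) atTop (nhds 0) := by
    intro θ
    have h0 : Tendsto (fun n => g n (circleMap 0 r θ)) atTop (nhds 0) :=
      hconv _ (hmem θ)
    have : Tendsto (fun n =>
        deriv (circleMap 0 r) θ •
          (((1 : ℂ) / (circleMap 0 r θ - 0)) ^ 1 •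
            (circleMap 0 r θ - 0)⁻¹ • g n (circleMap 0 r θ))) atTop (nhds
        (deriv (circleMap 0 r) θ •
          (((1 : ℂ) / (circleMap 0 r θ - 0)) ^ 1 • (circleMap 0 r θ - 0)⁻¹ • (0:ℂ)))) := by
      exact ((h0.const_smul _).const_smul _).const_smul _
    simp only [hF]
    simpa using this
  have hInt : Tendsto (fun n =>
      ∮ z in C(0, (rn : ℝ)), ((1 : ℂ) / (z - 0)) ^ 1 • (z - 0)⁻¹ • g n z) atTop (nhds 0) := by
    have hkey : Tendsto (fun n => ∫ θ in (0:ℝ)..(2 * Real.pi), F n θ) atTop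
        (nhds (∫ θ in (0:ℝ)..(2 * Real.pi), (0:ℂ))) := by
      rw [intervalIntegral.integral_of_le Real.two_pi_pos.le]
      simp_rw [intervalIntegral.integral_of_le Real.two_pi_pos.le]
      exact MeasureTheory.tendsto_integral_of_dominated_convergence (fun _ => M / r)
        (fun n => (hFcont n).aestronglyMeasurable)
        (integrable_const _)
        (fun n => Eventually.of_forall fun θ => hFbound n θ)
        (Eventually.of_forall fun θ => hFlim θ)
    simp only [intervalIntegral.integral_zero] at hkey
    convert hkey using 2
    rfl
  -- conclude λ^n → 0
  have hpow : Tendsto (fun n => (deriv f 0) ^ n) atTop (nhds 0) := by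
    have := hInt.const_smul ((2 * Real.pi * Complex.I : ℂ)⁻¹)
    simp only [smul_zero] at this
    convert this using 2 with n
    exact hcoeff n
  have habs' : Tendsto (fun n => ‖deriv f 0‖ ^ n) atTop (nhds 0) := by
    have h := (continuous_norm.tendsto 0).comp hpow
    simp only [Function.comp_def, norm_pow, norm_zero] at h
    exact h
  have := tendsto_pow_atTop_nhds_zero_iff.mp habs'
  rwa [_root_.abs_of_nonneg (norm_nonneg _)] at this
end

section
/- Let p ≥ 1 and A(x) = A₀ + A₁x + ⋯ + A_{p−1}x^{p−1} ∈ ℂ[x] with A₀ ≠ 0. Then there exists a formal power series ζ(x) = x + Σ_{j≥2} ζ_j x^j such that −A₀/(p·ζ(x)^p) = −A₀/(p x^p) − A₁/((p−1)x^{p−1}) − ⋯ − A_{p−1}/x, i.e. −A₀/(p ζ(x)^p) equals the primitive ∫ A(x)/x^{p+1} dx (with zero constant term in its Laurent expansion). Moreover the coefficients satisfy A₁ = −(p−1)·A₀·ζ₂ and, for 2 ≤ j < p, A_j = A₀·(−(p−j)·ζ_{j+1} + P_j(ζ₂,…,ζ_j)) where P_j is a polynomial with real coefficients. -/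
open PowerSeries

lemma psAdic : IsAdicComplete (IsLocalRing.maximalIdeal ℂ⟦X⟧) ℂ⟦X⟧ := by
  rw [PowerSeries.maximalIdeal_eq_span_X]
  have hmem : ∀ (n : ℕ) (f : ℂ⟦X⟧),
      f ∈ (Ideal.span {(X : ℂ⟦X⟧)} ^ n • ⊤ : Ideal ℂ⟦X⟧) ↔ ∀ i < n, coeff i f = 0 := by
    intro n f
    rw [← Ideal.one_eq_top, Ideal.smul_eq_mul, mul_one, Ideal.span_singleton_pow,
      Ideal.mem_span_singleton]
    exact PowerSeries.X_pow_dvd_iff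
  have h1 : IsHausdorff (Ideal.span {(X : ℂ⟦X⟧)}) ℂ⟦X⟧ := by
    refine ⟨fun x hx => ?_⟩
    ext i
    have := (hmem (i+1) x).mp (by simpa using (SModEq.zero).mp (hx (i+1))) i (by omega)
    simpa using this
  have h2 : IsPrecomplete (Ideal.span {(X : ℂ⟦X⟧)}) ℂ⟦X⟧ := by
    refine ⟨fun {f} hf => ?_⟩
    refine ⟨PowerSeries.mk fun k => coeff k (f (k+1)), fun n => ?_⟩
    rw [SModEq.sub_mem]
    rw [hmem]
    intro i hi
    have h1 : f (i+1) ≡ f n [SMOD (Ideal.span {(X : ℂ⟦X⟧)} ^ (i+1) • ⊤ : Ideal ℂ⟦X⟧)] :=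
      hf (by omega)
    have h2 := (hmem (i+1) _).mp (SModEq.sub_mem.mp h1) i (by omega)
    rw [map_sub] at h2 ⊢
    simp only [PowerSeries.coeff_mk]
    rw [sub_eq_zero] at h2 ⊢
    exact h2.symm
  exact ⟨⟩

lemma ps_mem_maximal (f : ℂ⟦X⟧) : f ∈ IsLocalRing.maximalIdeal ℂ⟦X⟧ ↔ constantCoeff f = 0 := by
  rw [← PowerSeries.ker_coeff_eq_max_ideal, RingHom.mem_ker]

lemma ps_pth_root (p : ℕ) (hp : 1 ≤ p) (F : ℂ⟦X⟧) (hF : constantCoeff F = 1) :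
    ∃ a : ℂ⟦X⟧, a ^ p = F ∧ constantCoeff a = 1 := by
  haveI := psAdic
  set f : Polynomial ℂ⟦X⟧ := Polynomial.X ^ p - Polynomial.C F with hf
  have hmonic : f.Monic := Polynomial.monic_X_pow_sub_C F (by omega)
  have h1 : f.eval 1 ∈ IsLocalRing.maximalIdeal ℂ⟦X⟧ := by
    rw [ps_mem_maximal]
    simp [hf, hF]
  have hImax : (IsLocalRing.maximalIdeal ℂ⟦X⟧).IsMaximal := IsLocalRing.maximalIdeal.isMaximal _
  have hunit : IsUnit (Ideal.Quotient.mk (IsLocalRing.maximalIdeal ℂ⟦X⟧) (f.derivative.eval 1)) := by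
    have hd : f.derivative.eval 1 = (p : ℂ⟦X⟧) := by
      simp [hf, Polynomial.derivative_X_pow]
    rw [hd]
    refine IsUnit.map _ ?_
    rw [PowerSeries.isUnit_iff_constantCoeff]
    simp only [map_natCast]
    exact (isUnit_iff_ne_zero).mpr (Nat.cast_ne_zero.mpr (by omega : p ≠ 0))
  obtain ⟨a, ha, hamem⟩ := HenselianRing.is_henselian f hmonic 1 h1 hunit
  refine ⟨a, ?_, ?_⟩
  · have := ha
    simp only [Polynomial.IsRoot, hf, Polynomial.eval_sub, Polynomial.eval_pow,
      Polynomial.eval_X, Polynomial.eval_C, sub_eq_zero] at this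
    exact this
  · rw [ps_mem_maximal, map_sub, map_one, sub_eq_zero] at hamem
    exact hamem

lemma coeff_pow_lt (f : ℂ⟦X⟧) (hf : constantCoeff f = 0) (p i : ℕ) (h : i < p) :
    coeff i (f ^ p) = 0 := by
  have hdvd : (X : ℂ⟦X⟧) ^ p ∣ f ^ p :=
    pow_dvd_pow_of_dvd (PowerSeries.X_dvd_iff.mpr hf) p
  exact PowerSeries.X_pow_dvd_iff.mp hdvd i h

lemma coeff_pow_self (f : ℂ⟦X⟧) (hf : constantCoeff f = 0) (hf1 : coeff 1 f = 1) (p : ℕ) :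
    coeff p (f ^ p) = 1 := by
  obtain ⟨g, hg⟩ := PowerSeries.X_dvd_iff.mpr hf
  have hg0 : constantCoeff g = 1 := by
    have := hf1
    rw [hg, PowerSeries.coeff_succ_X_mul 0 g, PowerSeries.coeff_zero_eq_constantCoeff_apply] at this
    exact this
  rw [hg, mul_pow]
  have := PowerSeries.coeff_X_pow_mul (g ^ p) p 0
  rw [zero_add] at this
  rw [this, PowerSeries.coeff_zero_eq_constantCoeff_apply, map_pow, hg0, one_pow]

lemma coeff_pow_mul (p n : ℕ) (f g : ℂ⟦X⟧) (hf : constantCoeff f = 0) :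
    coeff (p + n) (f ^ p * g) =
      ∑ t ∈ Finset.range (n + 1), coeff (p + t) (f ^ p) * coeff (n - t) g := by
  rw [PowerSeries.coeff_mul, Finset.Nat.sum_antidiagonal_eq_sum_range_succ_mk]
  have hsplit : Finset.range (p + n + 1) = Finset.range p ∪ Finset.Ico p (p + n + 1) := by
    rw [Finset.range_eq_Ico, Finset.range_eq_Ico, Finset.Ico_union_Ico_eq_Ico (by omega) (by omega)]
  rw [hsplit, Finset.sum_union (by
    simp [Finset.disjoint_left, Finset.mem_Ico]
    omega)]
  rw [Finset.sum_eq_zero (fun i hi => by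
    rw [coeff_pow_lt f hf p i (Finset.mem_range.mp hi), zero_mul]), zero_add]
  rw [Finset.sum_Ico_eq_sum_range]
  have : p + n + 1 - p = n + 1 := by omega
  rw [this]
  refine Finset.sum_congr rfl fun t ht => ?_
  have h2 : p + n - (p + t) = n - t := by omega
  rw [h2]

lemma coeff_pow_succ (p : ℕ) (hp : 1 ≤ p) (f : ℂ⟦X⟧) (hf : constantCoeff f = 0)
    (hf1 : coeff 1 f = 1) : coeff (p + 1) (f ^ p) = p * coeff 2 f := by
  induction p, hp using Nat.le_induction with
  | base => simp [pow_one]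
  | succ p hp ih =>
    have h1 : f ^ (p + 1) = f ^ p * f := pow_succ f p
    have h2 : p + 1 + 1 = p + 2 := by omega
    rw [h1, h2, coeff_pow_mul p 2 f f hf]
    rw [Finset.sum_range_succ, Finset.sum_range_succ, Finset.sum_range_one]
    simp only [add_zero]
    rw [coeff_pow_self f hf hf1 p, ih]
    norm_num [hf1, PowerSeries.coeff_zero_eq_constantCoeff_apply, hf]
    ring

lemma univPoly (p : ℕ) (hp : 1 ≤ p) :
    ∃ E : ℕ → MvPolynomial ℕ ℝ, ∀ m, 1 ≤ m →
      (∀ i ∈ (E m).vars, 2 ≤ i ∧ i ≤ m) ∧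
      ∀ ζ : ℂ⟦X⟧, constantCoeff ζ = 0 → coeff 1 ζ = 1 →
        coeff (p + m) (ζ ^ p) =
          p * coeff (m + 1) ζ + MvPolynomial.aeval (fun i => coeff i ζ) (E m) := by
  induction p, hp using Nat.le_induction with
  | base =>
    refine ⟨fun _ => 0, fun m hm => ⟨by simp, fun ζ h0 h1 => ?_⟩⟩
    simp [pow_one, add_comm 1 m]
  | succ p hp ih =>
    obtain ⟨E, hE⟩ := ih
    refine ⟨fun m => E m + ∑ i ∈ Finset.range (m - 1),
        (MvPolynomial.C (p : ℝ) * MvPolynomial.X (i + 2) + E (i + 1)) * MvPolynomial.X (m - i),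
      fun m hm => ?_⟩
    obtain ⟨m', rfl⟩ : ∃ m', m = m' + 1 := ⟨m - 1, by omega⟩
    beta_reduce
    rw [Nat.add_sub_cancel]
    constructor
    · intro i hi
      have h1 := MvPolynomial.vars_add_subset (E (m' + 1)) _ hi
      rcases Finset.mem_union.mp h1 with h | h
      · have := (hE (m' + 1) (by omega)).1 i h
        omega
      · have h2 := MvPolynomial.vars_sum_subset _ _ h
        rw [Finset.mem_biUnion] at h2
        obtain ⟨t, ht, hmem⟩ := h2
        have ht' := Finset.mem_range.mp ht
        have h3 := MvPolynomial.vars_mul _ _ hmem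
        rcases Finset.mem_union.mp h3 with h4 | h4
        · rcases Finset.mem_union.mp (MvPolynomial.vars_add_subset _ _ h4) with h5 | h5
          · have h6 := MvPolynomial.vars_mul _ _ h5
            rw [MvPolynomial.vars_C, Finset.empty_union, MvPolynomial.vars_X] at h6
            have := Finset.mem_singleton.mp h6
            omega
          · have := (hE (t + 1) (by omega)).1 i h5
            omega
        · rw [MvPolynomial.vars_X] at h4
          have := Finset.mem_singleton.mp h4
          omega
    · intro ζ h0 h1
      have hpow : ζ ^ (p + 1) = ζ ^ p * ζ := pow_succ ζ p
      have hidx : p + 1 + (m' + 1) = p + (m' + 2) := by omega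
      rw [hpow, hidx, coeff_pow_mul p (m' + 2) ζ ζ h0]
      rw [Finset.sum_range_succ]
      have hz0 : coeff (m' + 2 - (m' + 2)) ζ = 0 := by
        simp [PowerSeries.coeff_zero_eq_constantCoeff_apply, h0]
      rw [hz0, mul_zero, add_zero]
      rw [Finset.sum_range_succ']
      simp only [add_zero, Nat.sub_zero]
      rw [coeff_pow_self ζ h0 h1 p]
      rw [Finset.sum_range_succ]
      -- last term i = m' : coeff (p+m'+1)(ζ^p) * coeff (m'+2-(m'+1)) ζ
      have hlast : m' + 2 - (m' + 1 + 1) = 0 ∧ m' + 2 - (m' + 1) = 1 := by omega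
      have hIH : ∀ t, 1 ≤ t → coeff (p + t) (ζ ^ p) =
          p * coeff (t + 1) ζ + MvPolynomial.aeval (fun i => coeff i ζ) (E t) :=
        fun t ht => (hE t ht).2 ζ h0 h1
      rw [hIH (m' + 1) (by omega)]
      have hsum : ∀ i ∈ Finset.range m', coeff (p + (i + 1)) (ζ ^ p) * coeff (m' + 2 - (i + 1)) ζ
          = (p * coeff (i + 2) ζ + MvPolynomial.aeval (fun i => coeff i ζ) (E (i + 1))) *
            coeff (m' + 1 - i) ζ := by
        intro i hi
        rw [hIH (i + 1) (by omega)]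
        have : m' + 2 - (i + 1) = m' + 1 - i := by omega
        rw [this]
      rw [Finset.sum_congr rfl hsum]
      rw [hlast.2, h1]
      simp only [map_add, map_sum, map_mul, MvPolynomial.aeval_X, MvPolynomial.aeval_C]
      push_cast
      ring

/-- Conjugation of the principal part of a meromorphic primitive: given
`A(x) = A₀ + ⋯ + A_{p−1}x^{p−1}` with `A₀ ≠ 0`, there is a formal series
`ζ(x) = x + Σ ζ_j x^j` with `−A₀/(p ζ(x)^p) = Σ_{j=0}^{p−1} −A_j/((p−j)x^{p−j})`,
equivalently `A₀ x^p = ζ^p · Σ_{j<p} (p A_j/(p−j)) x^j`. Moreover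
`A₁ = −(p−1) A₀ ζ₂` and `A_j = A₀(−(p−j)ζ_{j+1} + P_j(ζ₂,…,ζ_j))`
with `P_j` real-coefficient polynomials. -/
theorem stmt12 (p : ℕ) (hp : 1 ≤ p) (A : ℕ → ℂ) (hA0 : A 0 ≠ 0)
    (hAhigh : ∀ j, p ≤ j → A j = 0) :
    ∃ ζ : PowerSeries ℂ,
      PowerSeries.constantCoeff ζ = 0 ∧ PowerSeries.coeff 1 ζ = 1 ∧
      PowerSeries.C (A 0) * PowerSeries.X ^ p =
        ζ ^ p * ∑ j ∈ Finset.range p,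
          PowerSeries.C ((p : ℂ) * A j / ((p : ℂ) - (j : ℂ))) * PowerSeries.X ^ j ∧
      (2 ≤ p → A 1 = -((p : ℂ) - 1) * A 0 * PowerSeries.coeff 2 ζ) ∧
      ∃ P : ℕ → MvPolynomial ℕ ℝ, ∀ j, 2 ≤ j → j < p →
        (∀ i ∈ (P j).vars, 2 ≤ i ∧ i ≤ j) ∧
        A j = A 0 * (-((p : ℂ) - (j : ℂ)) * PowerSeries.coeff (j + 1) ζ +
          MvPolynomial.aeval (fun i => PowerSeries.coeff i ζ) (P j)) := by
  classical
  have hpC : (p : ℂ) ≠ 0 := Nat.cast_ne_zero.mpr (by omega)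
  set b : ℕ → ℂ := fun k => (p : ℂ) * A k / ((p : ℂ) - (k : ℂ)) with hb
  set B : ℂ⟦X⟧ := ∑ j ∈ Finset.range p, PowerSeries.C (b j) * X ^ j with hBdef
  have hpsub : ∀ k : ℕ, k < p → (p : ℂ) - (k : ℂ) ≠ 0 := by
    intro k hk
    have : (k : ℂ) ≠ (p : ℂ) := by exact_mod_cast (by omega : k ≠ p)
    exact sub_ne_zero.mpr (Ne.symm this)
  have hcoeffB : ∀ k, coeff k B = b k := by
    intro k
    rw [hBdef, map_sum]
    simp only [PowerSeries.coeff_C_mul, PowerSeries.coeff_X_pow, mul_ite, mul_one, mul_zero]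
    rw [Finset.sum_ite_eq (Finset.range p) k b]
    by_cases hk : k < p
    · simp [hk]
    · simp only [Finset.mem_range, hk, if_false]
      rw [hb]
      simp [hAhigh k (by omega)]
  have hb0 : b 0 = A 0 := by
    rw [hb]
    simp only [Nat.cast_zero, sub_zero]
    exact mul_div_cancel_left₀ (A 0) hpC
  have hB0 : constantCoeff B = A 0 := by
    rw [← PowerSeries.coeff_zero_eq_constantCoeff_apply, hcoeffB 0, hb0]
  have hBne : constantCoeff B ≠ 0 := by rw [hB0]; exact hA0
  have hBinv : B * B⁻¹ = 1 := PowerSeries.mul_inv_cancel B hBne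
  have hF1 : constantCoeff (PowerSeries.C (A 0) * B⁻¹) = 1 := by
    rw [map_mul, PowerSeries.constantCoeff_C, PowerSeries.constantCoeff_inv, hB0]
    exact mul_inv_cancel₀ hA0
  obtain ⟨a, hap, ha0⟩ := ps_pth_root p hp _ hF1
  set ζ : ℂ⟦X⟧ := X * a with hzdef
  have hz0 : constantCoeff ζ = 0 := by
    rw [hzdef, map_mul, PowerSeries.constantCoeff_X, zero_mul]
  have hz1 : coeff 1 ζ = 1 := by
    rw [hzdef, PowerSeries.coeff_succ_X_mul 0 a,
      PowerSeries.coeff_zero_eq_constantCoeff_apply, ha0]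
  have hmain : PowerSeries.C (A 0) * X ^ p = ζ ^ p * B := by
    have h1 : ζ ^ p * B = PowerSeries.C (A 0) * X ^ p * (B * B⁻¹) := by
      rw [hzdef, mul_pow, hap]; ring
    rw [h1, hBinv, mul_one]
  set z : ℕ → ℂ := fun i => coeff i ζ with hzfun
  have key : ∀ j, 1 ≤ j →
      (0 : ℂ) = ∑ t ∈ Finset.range (j + 1), coeff (p + t) (ζ ^ p) * b (j - t) := by
    intro j hj
    have h := congrArg (coeff (p + j)) hmain
    rw [PowerSeries.coeff_C_mul, PowerSeries.coeff_X_pow, if_neg (by omega), mul_zero] at h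
    rw [coeff_pow_mul p j ζ B hz0] at h
    simpa only [hcoeffB] using h
  obtain ⟨E, hE⟩ := univPoly p hp
  set e : ℕ → ℂ := fun t => MvPolynomial.aeval z (E t) with hedef
  have hcp : ∀ t, 1 ≤ t → coeff (p + t) (ζ ^ p) = p * z (t + 1) + e t :=
    fun t ht => (hE t ht).2 ζ hz0 hz1
  have hA1 : 2 ≤ p → A 1 = -((p : ℂ) - 1) * A 0 * z 2 := by
    intro hp2
    have k1 := key 1 le_rfl
    rw [Finset.sum_range_succ, Finset.sum_range_one] at k1
    simp only [add_zero, Nat.sub_self, Nat.sub_zero] at k1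
    rw [coeff_pow_self ζ hz0 hz1 p, coeff_pow_succ p hp ζ hz0 hz1, one_mul] at k1
    rw [hb0] at k1
    have hb1 : b 1 = (p : ℂ) * A 1 / ((p : ℂ) - 1) := by rw [hb]; norm_num
    rw [hb1] at k1
    have hp1 : (p : ℂ) - 1 ≠ 0 := by
      have : (p : ℂ) ≠ 1 := by exact_mod_cast (by omega : p ≠ 1)
      exact sub_ne_zero.mpr this
    field_simp at k1
    have hz2 : coeff 2 ζ = z 2 := rfl
    rw [hz2] at k1
    refine mul_left_cancel₀ hpC ?_
    linear_combination -k1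
  -- general recursion
  have hGen : ∀ j, ∃ R Q : MvPolynomial ℕ ℝ,
      (1 ≤ j → j < p → (∀ i ∈ R.vars, 2 ≤ i ∧ i ≤ j + 1) ∧
        A j = A 0 * MvPolynomial.aeval z R) ∧
      (2 ≤ j → j < p → (∀ i ∈ Q.vars, 2 ≤ i ∧ i ≤ j) ∧
        A j = A 0 * (-((p : ℂ) - (j : ℂ)) * z (j + 1) + MvPolynomial.aeval z Q)) := by
    intro j
    induction j using Nat.strong_induction_on with
    | _ j IH =>
    rcases Nat.lt_or_ge j 2 with hj2 | hj2
    · -- j ≤ 1 : only the R-clause for j = 1 matters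
      refine ⟨MvPolynomial.C (-((p:ℝ) - 1)) * MvPolynomial.X 2, 0, fun hj1 hjp => ?_, fun h => by omega⟩
      have hj1' : j = 1 := by omega
      subst hj1'
      constructor
      · intro i hi
        have h := MvPolynomial.vars_mul _ _ hi
        rw [MvPolynomial.vars_C, Finset.empty_union, MvPolynomial.vars_X] at h
        have := Finset.mem_singleton.mp h
        omega
      · rw [hA1 (by omega)]
        simp only [map_mul, MvPolynomial.aeval_C, MvPolynomial.aeval_X]
        push_cast
        ring
    · by_cases hjp : j < p
      swap
      · exact ⟨0, 0, fun _ h => absurd h hjp, fun _ h => absurd h hjp⟩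
      obtain ⟨m, rfl⟩ : ∃ m, j = m + 1 := ⟨j - 1, by omega⟩
      have hm1 : 1 ≤ m := by omega
      -- choice of previous R's
      have IH' : ∀ k, ∃ R : MvPolynomial ℕ ℝ, k < m + 1 → 1 ≤ k → k < p →
          (∀ i ∈ R.vars, 2 ≤ i ∧ i ≤ k + 1) ∧ A k = A 0 * MvPolynomial.aeval z R := by
        intro k
        by_cases hk : k < m + 1
        · obtain ⟨R, Q, hR, _⟩ := IH k hk
          exact ⟨R, fun _ h1 h2 => hR h1 h2⟩
        · exact ⟨0, fun h => absurd h hk⟩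
      choose Rf hRf using IH'
      -- the key equation
      have k2 := key (m + 1) (by omega)
      rw [Finset.sum_range_succ'] at k2
      simp only [add_zero, Nat.sub_zero] at k2
      rw [coeff_pow_self ζ hz0 hz1 p, one_mul] at k2
      rw [Finset.sum_range_succ] at k2
      have hc1 : ∀ i ∈ Finset.range m, coeff (p + (i + 1)) (ζ ^ p) * b (m + 1 - (i + 1))
          = (p * z (i + 2) + e (i + 1)) * b (m - i) := by
        intro i hi
        rw [hcp (i + 1) (by omega)]
        have h1 : m + 1 - (i + 1) = m - i := by omega
        have h2 : i + 1 + 1 = i + 2 := by omega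
        rw [h1, h2]
      rw [Finset.sum_congr rfl hc1] at k2
      rw [hcp (m + 1) (by omega)] at k2
      have hml : m + 1 - (m + 1) = 0 := by omega
      rw [hml, hb0] at k2
      have hmm : m + 1 + 1 = m + 2 := by omega
      rw [hmm] at k2
      -- substitute the inductive expressions into the sum
      have hsub : ∀ i ∈ Finset.range m, (p * z (i + 2) + e (i + 1)) * b (m - i)
          = A 0 * ((p * z (i + 2) + e (i + 1)) *
              ((p : ℂ) / ((p : ℂ) - ((m - i : ℕ) : ℂ)) * MvPolynomial.aeval z (Rf (m - i)))) := by
        intro i hi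
        have hi' := Finset.mem_range.mp hi
        have hA := (hRf (m - i) (by omega) (by omega) (by omega)).2
        rw [hb]
        simp only
        rw [hA]
        ring
      rw [Finset.sum_congr rfl hsub, ← Finset.mul_sum] at k2
      set S1 : ℂ := ∑ i ∈ Finset.range m, (p * z (i + 2) + e (i + 1)) *
          ((p : ℂ) / ((p : ℂ) - ((m - i : ℕ) : ℂ)) * MvPolynomial.aeval z (Rf (m - i))) with hS1
      -- define Q and R
      set Q : MvPolynomial ℕ ℝ := MvPolynomial.C (-(((p:ℝ) - ((m:ℝ) + 1)) / (p:ℝ))) *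
        (E (m + 1) + ∑ i ∈ Finset.range m,
          (MvPolynomial.C (p:ℝ) * MvPolynomial.X (i + 2) + E (i + 1)) *
          (MvPolynomial.C ((p:ℝ) / ((p:ℝ) - ((m - i : ℕ) : ℝ))) * Rf (m - i))) with hQ
      have haQ : MvPolynomial.aeval z Q =
          (-(((p:ℂ) - ((m:ℂ) + 1)) / (p:ℂ))) * (e (m + 1) + S1) := by
        rw [hQ]
        simp only [map_mul, map_add, map_sum, MvPolynomial.aeval_C, MvPolynomial.aeval_X]
        rw [hS1, hedef]
        simp only [map_neg, map_div₀, map_sub, map_add, map_one, map_natCast]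
      have hQvars : ∀ i ∈ Q.vars, 2 ≤ i ∧ i ≤ m + 1 := by
        intro i hi
        have h := MvPolynomial.vars_mul _ _ hi
        rw [MvPolynomial.vars_C, Finset.empty_union] at h
        rcases Finset.mem_union.mp (MvPolynomial.vars_add_subset _ _ h) with h1 | h1
        · have := (hE (m + 1) (by omega)).1 i h1
          omega
        · have h2 := MvPolynomial.vars_sum_subset _ _ h1
          rw [Finset.mem_biUnion] at h2
          obtain ⟨t, ht, hmem⟩ := h2
          have ht' := Finset.mem_range.mp ht
          rcases Finset.mem_union.mp (MvPolynomial.vars_mul _ _ hmem) with h3 | h3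
          · rcases Finset.mem_union.mp (MvPolynomial.vars_add_subset _ _ h3) with h4 | h4
            · have h5 := MvPolynomial.vars_mul _ _ h4
              rw [MvPolynomial.vars_C, Finset.empty_union, MvPolynomial.vars_X] at h5
              have := Finset.mem_singleton.mp h5
              omega
            · have := (hE (t + 1) (by omega)).1 i h4
              omega
          · rcases Finset.mem_union.mp (MvPolynomial.vars_mul _ _ h3) with h4 | h4
            · rw [MvPolynomial.vars_C] at h4
              exact absurd h4 (Finset.notMem_empty i)
            · have := (hRf (m - t) (by omega) (by omega) (by omega)).1 i h4
              omega
      -- the coefficient formula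
      have hpm : (p : ℂ) - ((m : ℂ) + 1) ≠ 0 := by
        have h := hpsub (m + 1) hjp
        push_cast at h
        exact h
      have hAexpr : A (m + 1) = A 0 * (-((p : ℂ) - ((m : ℂ) + 1)) * z (m + 2) +
          MvPolynomial.aeval z Q) := by
        have hbm : b (m + 1) = (p : ℂ) * A (m + 1) / ((p : ℂ) - ((m : ℂ) + 1)) := by
          rw [hb]; push_cast; ring_nf
        rw [hbm] at k2
        have e1 : (p:ℂ) * A (m + 1) / ((p:ℂ) - ((m:ℂ) + 1)) =
            -(A 0 * S1 + ((p:ℂ) * z (m + 2) + e (m + 1)) * A 0) := by linear_combination -k2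
        have e2 : (p:ℂ) * A (m + 1) =
            -(A 0 * S1 + ((p:ℂ) * z (m + 2) + e (m + 1)) * A 0) * ((p:ℂ) - ((m:ℂ) + 1)) := by
          rw [← e1]
          field_simp
        refine mul_left_cancel₀ hpC ?_
        rw [haQ, e2]
        field_simp
        ring
      refine ⟨MvPolynomial.C (-((p:ℝ) - ((m:ℝ) + 1))) * MvPolynomial.X (m + 2) + Q, Q,
        fun _ _ => ⟨?_, ?_⟩, fun _ _ => ⟨hQvars, ?_⟩⟩
      · intro i hi
        rcases Finset.mem_union.mp (MvPolynomial.vars_add_subset _ _ hi) with h1 | h1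
        · have h2 := MvPolynomial.vars_mul _ _ h1
          rw [MvPolynomial.vars_C, Finset.empty_union, MvPolynomial.vars_X] at h2
          have := Finset.mem_singleton.mp h2
          omega
        · have := hQvars i h1
          omega
      · have haR : MvPolynomial.aeval z (MvPolynomial.C (-((p:ℝ) - ((m:ℝ) + 1))) *
            MvPolynomial.X (m + 2) + Q) =
            -((p : ℂ) - ((m : ℂ) + 1)) * z (m + 2) + MvPolynomial.aeval z Q := by
          simp only [map_add, map_mul, MvPolynomial.aeval_C, MvPolynomial.aeval_X, map_neg,
            map_sub, map_one, map_natCast]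
        rw [haR, hAexpr]
      · rw [hAexpr]
        norm_cast
  -- assemble
  choose RF QF hRQ using hGen
  refine ⟨ζ, hz0, hz1, hmain, hA1, QF, fun j hj2 hjp => ?_⟩
  obtain ⟨hv, he⟩ := (hRQ j).2 hj2 hjp
  exact ⟨hv, by rw [he]⟩
end

section
/- Let g : ℂ → ℂ be given by g(x) = x − x^{m} + h(x) where m ≥ 2 and |h(x)| ≤ C|x|^{m+1} on |x| < ε₀. Define, for d, e, ε > 0, the sector R_{d,e,ε} = { x ∈ ℂ : |x| < ε, −d·Re(x) < Im(x) < e·Re(x) }. Then for d, e, ε > 0 sufficiently small: (i) Re(g(x)) > 0 for x ∈ R_{d,e,ε}; (ii) |g(x)| ≤ |x| for x ∈ R_{d,e,ε}; and in fact g(R_{d,e,ε}) ⊆ R_{d,e,ε}. -/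
set_option maxHeartbeats 1600000

/-- Componentwise bounds for powers of a complex number in a narrow upper half-sector. -/
lemma sector_pow (e : ℝ) (he : 0 < e) (x : ℂ) (ha : 0 < x.re)
    (hb : 0 ≤ x.im) (hbe : x.im ≤ e * x.re) :
    ∀ k : ℕ, 1 ≤ k → (k : ℝ) * e ≤ 1/2 →
      (x ^ k).re ≤ x.re ^ k ∧
      (1 - (k:ℝ)^2 * e^2) * x.re ^ k ≤ (x ^ k).re ∧
      0 ≤ (x ^ k).im ∧
      (x ^ k).im ≤ (k:ℝ) * e * x.re ^ k ∧
      3/4 * (k:ℝ) * x.im * x.re ^ (k-1) ≤ (x ^ k).im := by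
  intro k
  induction k with
  | zero => omega
  | succ n ih =>
    intro _ hke
    rcases Nat.eq_zero_or_pos n with hn0 | hn1
    · subst hn0
      refine ⟨?_, ?_, ?_, ?_, ?_⟩ <;>
      · simp only [zero_add, pow_one, pow_zero, Nat.cast_one, Nat.sub_self]
        nlinarith [sq_nonneg e, ha, hb, hbe]
    · have hNe : (0:ℝ) ≤ (n:ℝ) := Nat.cast_nonneg n
      have hne : (n:ℝ) * e ≤ 1/2 := by
        push_cast at hke; nlinarith
      obtain ⟨h1, h2, h3, h4, h5⟩ := ih hn1 hne
      have hpow : x ^ (n+1) = x ^ n * x := pow_succ x n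
      have hre : (x ^ (n+1)).re = (x^n).re * x.re - (x^n).im * x.im := by
        rw [hpow, Complex.mul_re]
      have him : (x ^ (n+1)).im = (x^n).re * x.im + (x^n).im * x.re := by
        rw [hpow, Complex.mul_im]
      have hap : 0 < x.re ^ n := pow_pos ha n
      have hap1 : 0 < x.re ^ (n-1) := pow_pos ha (n-1)
      have hps : x.re ^ (n+1) = x.re ^ n * x.re := pow_succ x.re n
      have hps' : x.re ^ (n-1) * x.re = x.re ^ n := by
        rw [← pow_succ]; congr 1; omega
      have hn2e : ((n:ℝ))^2 * e^2 ≤ 1/4 := by nlinarith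
      have hanlow : 3/4 * x.re ^ n ≤ (x^n).re := by nlinarith
      have han0 : 0 ≤ (x^n).re := by nlinarith
      push_cast
      refine ⟨?_, ?_, ?_, ?_, ?_⟩
      · rw [hre, hps]; nlinarith [mul_nonneg h3 hb]
      · rw [hre, hps]
        have hbnb : (x^n).im * x.im ≤ ((n:ℝ) * e * x.re^n) * (e * x.re) :=
          mul_le_mul h4 hbe hb (by positivity)
        have hcoef : (0:ℝ) ≤ ((n:ℝ)*e^2 + e^2) * (x.re^n * x.re) := by positivity
        nlinarith [mul_le_mul_of_nonneg_right h2 ha.le]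
      · rw [him]
        have := mul_nonneg han0 hb
        have := mul_nonneg h3 ha.le
        linarith
      · rw [him, hps]
        have e3 : (x^n).re * x.im ≤ x.re^n * (e * x.re) :=
          mul_le_mul h1 hbe hb hap.le
        have e4 : (x^n).im * x.re ≤ ((n:ℝ) * e * x.re^n) * x.re :=
          mul_le_mul_of_nonneg_right h4 ha.le
        nlinarith
      · rw [him]
        have e1 : 3/4 * (n:ℝ) * x.im * x.re ^ (n-1) * x.re ≤ (x^n).im * x.re :=
          mul_le_mul_of_nonneg_right h5 ha.le
        have e2 : 3/4 * x.re^n * x.im ≤ (x^n).re * x.im :=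
          mul_le_mul_of_nonneg_right hanlow hb
        have hps'' : x.im * (x.re^(n-1) * x.re) = x.im * x.re^n := by rw [hps']
        nlinarith [e1, e2, hps'']

/-- One-sided boundary estimate: the rotation by `-x^m` pushes strictly into the sector. -/
lemma sector_side (m : ℕ) (hm : 2 ≤ m) (e C ε : ℝ) (he : 0 < e)
    (hme : (m:ℝ) * e = 1/2) (hC : 0 < C) (hε0 : 0 < ε) (hε1 : ε ≤ 1)
    (hKey : ε * (16 * (C+1) * 2^(m+6)) ≤ e)
    (y : ℂ) (hyε : ‖y‖ < ε)
    (hy1 : -e * y.re < y.im) (hy2 : y.im < e * y.re) :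
    2 * (C * (‖y‖)^(m+1)) <
      (e * y.re - y.im) + ((y^m).im - e * (y^m).re) := by
  have hm2 : (2:ℝ) ≤ (m:ℝ) := by exact_mod_cast hm
  have ha : 0 < y.re := by nlinarith
  have he4 : e ≤ 1/4 := by nlinarith
  set a := y.re with ha_def
  set X := ‖y‖ with hX_def
  have hX0 : 0 ≤ X := norm_nonneg y
  have hXa : a ≤ X := Complex.re_le_norm y
  have hX2 : X ≤ 2 * a := by
    have h2 : X^2 ≤ (2*a)^2 := by
      rw [hX_def, Complex.sq_norm, Complex.normSq_apply, ← ha_def]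
      nlinarith [mul_pos (by linarith : (0:ℝ) < e*a - y.im) (by linarith : (0:ℝ) < e*a + y.im),
        mul_le_mul he4 he4 he.le (by norm_num), mul_pos ha ha]
    exact le_of_pow_le_pow_left₀ two_ne_zero (by positivity) h2
  have hP1 : (1:ℝ) ≤ 2^m := by
    calc (1:ℝ) = 2^0 := (pow_zero 2).symm
    _ ≤ 2^m := pow_le_pow_right₀ (by norm_num) (Nat.zero_le m)
  have hP0 : (0:ℝ) < 2^m := by positivity
  have hP6 : (2:ℝ)^(m+6) = 2^m * 64 := by rw [pow_add]; norm_num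
  have haε : a < ε := lt_of_le_of_lt hXa hyε
  have ha1 : a ≤ 1 := by linarith
  have hap : 0 < a^m := pow_pos ha m
  have ham1 : a^(m-1) ≤ a := by
    calc a^(m-1) ≤ a^1 := pow_le_pow_of_le_one ha.le ha1 (by omega)
    _ = a := pow_one a
  have hamm : a^(m-1) * a = a^m := by rw [← pow_succ]; congr 1; omega
  have hams : a^(m+1) = a^m * a := pow_succ a m
  have hamε : a^m ≤ ε * a := by nlinarith [pow_pos ha (m-1)]
  have hXm : X^m ≤ 2^m * a^m := by
    calc X^m ≤ (2*a)^m := pow_le_pow_left₀ hX0 hX2 m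
    _ = 2^m * a^m := mul_pow 2 a m
  have hXm1 : X^(m+1) ≤ 2^m * 2 * a^m * a := by
    calc X^(m+1) ≤ (2*a)^(m+1) := pow_le_pow_left₀ hX0 hX2 (m+1)
    _ = 2^m * 2 * a^m * a := by rw [mul_pow, pow_succ, pow_succ]; ring
  have habs_re : |(y^m).re| ≤ X^m := by
    calc |(y^m).re| ≤ ‖y^m‖ := Complex.abs_re_le_norm _
    _ = X^m := by rw [norm_pow]
  have habs_im : |(y^m).im| ≤ X^m := by
    calc |(y^m).im| ≤ ‖y^m‖ := Complex.abs_im_le_norm _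
    _ = X^m := by rw [norm_pow]
  have hεP : ε * ((C+1) * 2^m) ≤ e / 1024 := by nlinarith
  have hLHS : 2 * (C * X^(m+1)) ≤ 4 * C * 2^m * (ε * a^m) := by
    have h1 : C * X^(m+1) ≤ C * (2^m * 2 * a^m * a) :=
      mul_le_mul_of_nonneg_left hXm1 hC.le
    nlinarith [mul_pos hP0 hap, mul_pos hC (mul_pos hP0 hap)]
  rcases le_or_gt (3/4 * e * a) y.im with hA | hB
  -- Case A : near the upper boundary
  · have hb0 : 0 ≤ y.im := by nlinarith
    obtain ⟨h1, h2, h3, h4, h5⟩ :=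
      sector_pow e he y ha hb0 hy2.le m (by omega) (le_of_eq hme)
    -- (y^m).im ≥ (9/32) a^m
    have hbm : 9/32 * a^m ≤ (y^m).im := by
      have k1 : 3/4 * (m:ℝ) * (3/4 * e * a) * a^(m-1) ≤ 3/4 * (m:ℝ) * y.im * a^(m-1) := by
        have : (0:ℝ) ≤ 3/4 * (m:ℝ) * a^(m-1) := by positivity
        nlinarith [pow_pos ha (m-1)]
      have k2 : 3/4 * (m:ℝ) * (3/4 * e * a) * a^(m-1) = 9/16 * ((m:ℝ)*e) * (a^(m-1) * a) := by
        ring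
      rw [k2, hme, hamm] at k1
      linarith [h5]
    have ham : e * (y^m).re ≤ 1/4 * a^m := by
      have : (y^m).re ≤ a^m := h1
      nlinarith
    have hmargin : 1/32 * a^m ≤ ((y^m).im - e * (y^m).re) := by linarith
    have hLHS2 : 4 * C * 2^m * (ε * a^m) ≤ 1/256 * a^m := by
      have v1 : ε * ((C+1) * 2^m) * a^m ≤ e/1024 * a^m :=
        mul_le_mul_of_nonneg_right hεP hap.le
      have v2 : e/1024 * a^m ≤ 1/4096 * a^m :=
        mul_le_mul_of_nonneg_right (by linarith : e/1024 ≤ (1:ℝ)/4096) hap.le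
      have v3 : (0:ℝ) ≤ ε * 2^m * a^m := by positivity
      linarith only [v1, v2, v3, hap]
    linarith only [hy2, hap, hLHS, hLHS2, hmargin]
  -- Case B : away from the upper boundary
  · have hlow : 1/4 * (e * a) < e * a - y.im := by nlinarith
    have hbm : -(2^m * a^m) ≤ (y^m).im := by
      have := abs_le.mp habs_im
      linarith [hXm]
    have ham : e * (y^m).re ≤ 2^m * a^m := by
      have h1 : (y^m).re ≤ 2^m * a^m := le_trans (le_abs_self _) (le_trans habs_re hXm)
      have h2 : e * (y^m).re ≤ e * (2^m * a^m) := mul_le_mul_of_nonneg_left h1 he.le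
      have h3 : e * (2^m * a^m) ≤ 1 * (2^m * a^m) :=
        mul_le_mul_of_nonneg_right (by linarith) (mul_pos hP0 hap).le
      linarith only [h2, h3]
    have hε2m : ε * 2^m ≤ e/1024 := by
      have hKey2 : ε * (16*(C+1)*(2^m*64)) ≤ e := by rw [← hP6]; exact hKey
      linarith only [hKey2, mul_nonneg (mul_nonneg hC.le hε0.le) hP0.le]
    have hama : a^m ≤ a := by
      linarith only [hamε, mul_le_mul_of_nonneg_right hε1 ha.le]
    have hLHS2 : 4 * C * 2^m * (ε * a^m) ≤ e/256 * a := by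
      have v1 : ε * ((C+1) * 2^m) * a^m ≤ e/1024 * a^m :=
        mul_le_mul_of_nonneg_right hεP hap.le
      have v2 : e/1024 * a^m ≤ e/1024 * a :=
        mul_le_mul_of_nonneg_left hama (by positivity)
      have v3 : (0:ℝ) ≤ ε * 2^m * a^m := by positivity
      linarith only [v1, v2, v3]
    have hsmall : 2 * (2^m * a^m) ≤ e/256 * a := by
      have u1 : 2^m * a^m ≤ 2^m * (ε*a) := mul_le_mul_of_nonneg_left hamε hP0.le
      have u3 : (ε*2^m)*a ≤ (e/1024)*a := mul_le_mul_of_nonneg_right hε2m ha.le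
      nlinarith
    linarith only [hlow, hbm, ham, hLHS, hLHS2, hsmall, mul_pos he ha]

lemma aux_pos (e u v : ℝ) (he : 0 < e) (h1 : -e*u < v) (h2 : v < e*u) : 0 < u := by
  by_contra h
  push_neg at h
  have h3 : 0 ≤ e * (-u) := mul_nonneg he.le (by linarith)
  nlinarith

lemma aux_abs_sq (e u v : ℝ) (he : 0 < e) (he4 : e ≤ 1/4) (hu : 0 < u)
    (h1 : -e*u < v) (h2 : v < e*u) : u*u + v*v ≤ (2*u)^2 := by
  nlinarith [mul_pos (by linarith : (0:ℝ) < e*u - v) (by linarith : (0:ℝ) < e*u + v),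
    mul_le_mul he4 he4 he.le (by norm_num), mul_pos hu hu]

/-- Invariance of the Leau–Fatou sector `R_{d,e,ε} = {|x| < ε, −d Re x < Im x < e Re x}`
under `g(x) = x − x^m + O(x^{m+1})`: for `d, e, ε > 0` small enough, every `x ∈ R_{d,e,ε}`
satisfies `Re(g x) > 0`, `|g x| ≤ |x|`, and `g x ∈ R_{d,e,ε}`. -/
theorem stmt13 (m : ℕ) (hm : 2 ≤ m) (C ε₀ : ℝ) (hC : 0 < C) (hε₀ : 0 < ε₀)
    (g : ℂ → ℂ) (hg : ∀ x : ℂ, ‖x‖ < ε₀ → ‖g x - (x - x ^ m)‖ ≤ C * ‖x‖ ^ (m + 1)) :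
    ∃ d e ε : ℝ, 0 < d ∧ 0 < e ∧ 0 < ε ∧ ∀ x : ℂ,
      (‖x‖ < ε ∧ -d * x.re < x.im ∧ x.im < e * x.re) →
      0 < (g x).re ∧ ‖g x‖ ≤ ‖x‖ ∧
      (‖g x‖ < ε ∧ -d * (g x).re < (g x).im ∧ (g x).im < e * (g x).re) := by
  have hm2 : (2:ℝ) ≤ (m:ℝ) := by exact_mod_cast hm
  have hmpos : (0:ℝ) < m := by linarith
  set e : ℝ := 1 / (2*(m:ℝ)) with he_def
  have he : 0 < e := by positivity
  have hme : (m:ℝ) * e = 1/2 := by rw [he_def]; field_simp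
  have he4 : e ≤ 1/4 := by
    have h1 : 0 ≤ ((m:ℝ) - 2) * e := mul_nonneg (by linarith) he.le
    linarith only [h1, hme]
  have hden : (0:ℝ) < 16*(C+1)*2^(m+6) := by positivity
  have hden1 : (1:ℝ) ≤ 16*(C+1)*2^(m+6) := by
    have h2 : (1:ℝ) ≤ 2^(m+6) := one_le_pow₀ (by norm_num)
    have h3 : 0 ≤ C * 2^(m+6) := mul_nonneg hC.le (by positivity)
    linarith only [h2, h3]
  set ε : ℝ := min ε₀ (e / (16*(C+1)*2^(m+6))) with hε_def
  have hε0 : 0 < ε := lt_min hε₀ (by positivity)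
  have hεε₀ : ε ≤ ε₀ := min_le_left _ _
  have hεr : ε ≤ e / (16*(C+1)*2^(m+6)) := min_le_right _ _
  have hKey : ε * (16*(C+1)*2^(m+6)) ≤ e := by
    rw [← div_mul_cancel₀ e hden.ne']
    exact mul_le_mul_of_nonneg_right hεr hden.le
  have hε1 : ε ≤ 1 := by
    have h1 : e / (16*(C+1)*2^(m+6)) ≤ e := div_le_self he.le hden1
    linarith
  -- power facts
  have hP0 : (0:ℝ) < 2^m := by positivity
  have hP1 : (1:ℝ) ≤ 2^m := one_le_pow₀ (by norm_num)
  have hP6 : (2:ℝ)^(m+6) = 2^m * 64 := by rw [pow_add]; norm_num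
  have hεP2 : ε * (C+1) * 2^m ≤ 1/4096 := by
    have hKey2 : ε * (16*(C+1)*(2^m*64)) ≤ e := by rw [← hP6]; exact hKey
    linarith only [hKey2, he4]
  have he1' : ε * 2^m ≤ 1/4096 := by
    linarith only [hεP2, mul_nonneg (mul_nonneg hε0.le hC.le) hP0.le]
  have he2' : ε * C * 2^m ≤ 1/4096 := by
    linarith only [hεP2, mul_nonneg hε0.le hP0.le]
  have he3' : ε * C ≤ 1/4096 := by
    have h1 : 0 ≤ ε * C * (2^m - 1) :=
      mul_nonneg (mul_nonneg hε0.le hC.le) (by linarith)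
    linarith only [he2', h1]
  have hquart : (m:ℝ)^2*e^2 = 1/4 := by
    rw [show (m:ℝ)^2*e^2 = ((m:ℝ)*e)^2 by ring, hme]; norm_num
  refine ⟨e, e, ε, he, he, hε0, ?_⟩
  rintro x ⟨hxε, hx1, hx2⟩
  have ha : 0 < x.re := aux_pos e x.re x.im he hx1 hx2
  have hxε₀ : ‖x‖ < ε₀ := lt_of_lt_of_le hxε hεε₀
  set X := ‖x‖ with hX_def
  have hX0 : 0 ≤ X := norm_nonneg x
  have hXa : x.re ≤ X := Complex.re_le_norm x
  have hXpos : 0 < X := lt_of_lt_of_le ha hXa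
  have hX1 : X ≤ 1 := by linarith
  have hX2 : X ≤ 2 * x.re := by
    have h2 : X^2 ≤ (2*x.re)^2 := by
      rw [hX_def, Complex.sq_norm, Complex.normSq_apply]
      exact aux_abs_sq e x.re x.im he he4 ha hx1 hx2
    exact le_of_pow_le_pow_left₀ two_ne_zero (by positivity) h2
  -- the error term
  set r : ℂ := g x - (x - x^m) with hr_def
  have hgx : g x = x - x^m + r := by rw [hr_def]; ring
  have hrE : ‖r‖ ≤ C * X^(m+1) := by
    have h := hg x hxε₀
    simpa only [hr_def, hX_def] using h
  have hE0 : 0 ≤ C * X^(m+1) := by positivity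
  have hre1 : -(C * X^(m+1)) ≤ r.re := by
    have := (abs_le.mp (le_trans (Complex.abs_re_le_norm r) hrE)).1; linarith
  have hre2 : r.re ≤ C * X^(m+1) :=
    (abs_le.mp (le_trans (Complex.abs_re_le_norm r) hrE)).2
  have him1 : -(C * X^(m+1)) ≤ r.im := by
    have := (abs_le.mp (le_trans (Complex.abs_im_le_norm r) hrE)).1; linarith
  have him2 : r.im ≤ C * X^(m+1) :=
    (abs_le.mp (le_trans (Complex.abs_im_le_norm r) hrE)).2
  have hgre : (g x).re = x.re - (x^m).re + r.re := by
    rw [hgx]; simp [Complex.add_re, Complex.sub_re]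
  have hgim : (g x).im = x.im - (x^m).im + r.im := by
    rw [hgx]; simp [Complex.add_im, Complex.sub_im]
  have w1 : -(C * X^(m+1)) ≤ e * r.re := by
    have t1 : e * (-(C * X^(m+1))) ≤ e * r.re := mul_le_mul_of_nonneg_left hre1 he.le
    have t2 : e * (C * X^(m+1)) ≤ 1 * (C * X^(m+1)) :=
      mul_le_mul_of_nonneg_right (by linarith) hE0
    linarith only [t1, t2]
  -- upper sector bound
  have hu := sector_side m hm e C ε he hme hC hε0 hε1 hKey x hxε hx1 hx2
  rw [← hX_def] at hu
  have hgu : (g x).im < e * (g x).re := by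
    rw [hgre, hgim]
    have expand : e * (x.re - (x^m).re + r.re) = e*x.re - e*(x^m).re + e*r.re := by ring
    rw [expand]
    linarith only [hu, w1, him2]
  -- lower sector bound via conjugation
  have hcx := sector_side m hm e C ε he hme hC hε0 hε1 hKey ((starRingEnd ℂ) x)
    (by rwa [Complex.norm_conj]) (by rw [Complex.conj_re, Complex.conj_im]; linarith)
    (by rw [Complex.conj_re, Complex.conj_im]; linarith)
  have hym : ((starRingEnd ℂ) x)^m = (starRingEnd ℂ) (x^m) := (map_pow _ x m).symm
  simp only [hym, Complex.norm_conj, Complex.conj_re, Complex.conj_im, ← hX_def] at hcx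
  have hgl : -e * (g x).re < (g x).im := by
    rw [hgre, hgim]
    have expand : -e * (x.re - (x^m).re + r.re) = -(e*x.re) + e*(x^m).re + (-(e*r.re)) := by ring
    rw [expand]
    linarith only [hcx, w1, him1]
  have hgRe : 0 < (g x).re := aux_pos e (g x).re (g x).im he hgl hgu
  -- modulus decreases
  have hdot : 3/4 * x.re^(m+1) ≤ x.re * (x^m).re + x.im * (x^m).im := by
    have hps : x.re^(m+1) = x.re^m * x.re := pow_succ _ _
    rcases le_or_gt 0 x.im with hb | hb
    · obtain ⟨h1, h2, h3, h4, h5⟩ := sector_pow e he x ha hb hx2.le m (by omega) (le_of_eq hme)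
      rw [hquart] at h2
      linarith only [mul_nonneg hb h3, mul_le_mul_of_nonneg_left h2 ha.le, hps]
    · obtain ⟨h1, h2, h3, h4, h5⟩ := sector_pow e he ((starRingEnd ℂ) x)
        (by rw [Complex.conj_re]; exact ha)
        (by rw [Complex.conj_im]; linarith)
        (by rw [Complex.conj_re, Complex.conj_im]; linarith) m (by omega) (le_of_eq hme)
      simp only [hym, Complex.conj_re, Complex.conj_im] at h2 h3
      rw [hquart] at h2
      have h7 : 0 ≤ x.im * (x^m).im := by
        have h8 := mul_nonneg (by linarith : (0:ℝ) ≤ -x.im) h3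
        linarith only [h8]
      linarith only [h7, mul_le_mul_of_nonneg_left h2 ha.le, hps]
  set Y := ‖x - x^m‖ with hY_def
  have hY0 : 0 ≤ Y := norm_nonneg _
  have hYsq : Y^2 = X^2 - 2*(x.re * (x^m).re + x.im * (x^m).im) + (X^m)^2 := by
    have e1 : X^2 = x.re^2 + x.im^2 := by
      rw [hX_def, Complex.sq_norm, Complex.normSq_apply]; ring
    have e2 : (X^m)^2 = (x^m).re^2 + (x^m).im^2 := by
      rw [hX_def, ← norm_pow, Complex.sq_norm, Complex.normSq_apply]; ring
    rw [hY_def, Complex.sq_norm, Complex.normSq_apply, Complex.sub_re, Complex.sub_im,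
      e1, e2]
    ring
  have hY2X : Y ≤ 2 * X := by
    have t : ‖x - x^m‖ ≤ ‖x‖ + ‖x^m‖ := by
      simpa [sub_eq_add_neg] using norm_add_le x (-(x^m))
    have t2 : ‖x^m‖ = X^m := by rw [hX_def, norm_pow]
    have t3 : X^m ≤ X := by
      calc X^m ≤ X^1 := pow_le_pow_of_le_one hX0 hX1 (by omega)
      _ = X := pow_one _
    rw [t2] at t
    linarith
  have hXm1X : X^(m-1) ≤ X := by
    calc X^(m-1) ≤ X^1 := pow_le_pow_of_le_one hX0 hX1 (by omega)
    _ = X := pow_one _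
  have hXms2 : X^(m+1) * X^(m-1) = (X^m)^2 := by
    rw [← pow_add, ← pow_mul]; congr 1; omega
  have hXp1 : (0:ℝ) ≤ X^(m+1) := by positivity
  set Q : ℝ := 2^(m+1) with hQ_def
  have hQpos : 0 < Q := by positivity
  have hQ2 : Q = 2 * 2^m := by rw [hQ_def, pow_succ]; ring
  have hk1 : 3/4 * X^(m+1) ≤ Q * (x.re * (x^m).re + x.im * (x^m).im) := by
    have f1 : (X/2)^(m+1) ≤ x.re^(m+1) :=
      pow_le_pow_left₀ (by positivity) (by linarith) _
    have idt : (X/2)^(m+1) * 2^(m+1) = X^(m+1) := by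
      rw [div_pow]; field_simp
    have k0 : 3/4 * (X/2)^(m+1) ≤ x.re * (x^m).re + x.im * (x^m).im := by
      linarith only [f1, hdot]
    have k2 := mul_le_mul_of_nonneg_left k0 hQpos.le
    calc 3/4 * X^(m+1) = Q * (3/4 * (X/2)^(m+1)) := by
          rw [hQ_def, ← idt]; ring
    _ ≤ Q * (x.re * (x^m).re + x.im * (x^m).im) := k2
  have habsle : ‖g x‖ ≤ X := by
    have tri : ‖g x‖ ≤ Y + C * X^(m+1) := by
      rw [hgx]
      calc ‖x - x^m + r‖ ≤ ‖x - x^m‖ + ‖r‖ :=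
            norm_add_le _ _
      _ ≤ Y + C * X^(m+1) := by rw [← hY_def]; linarith
    have s0 : (‖g x‖)^2 ≤ (Y + C * X^(m+1))^2 :=
      pow_le_pow_left₀ (norm_nonneg _) tri 2
    have s3 : (X^m)^2 ≤ ε * X^(m+1) := by
      rw [← hXms2]
      have u : X^(m-1) ≤ ε := by linarith
      have := mul_le_mul_of_nonneg_left u hXp1
      linarith only [this]
    have s4 : 2 * Y * (C * X^(m+1)) ≤ 4 * C * ε * X^(m+1) := by
      have u1 : Y * (C * X^(m+1)) ≤ (2*X) * (C * X^(m+1)) :=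
        mul_le_mul_of_nonneg_right hY2X hE0
      have u2 : X * X^(m+1) ≤ ε * X^(m+1) :=
        mul_le_mul_of_nonneg_right (by linarith) hXp1
      have u2C := mul_le_mul_of_nonneg_left u2 hC.le
      linarith only [u1, u2C]
    have s5 : (C * X^(m+1))^2 ≤ C^2 * ε^2 * X^(m+1) := by
      have u1 : X^(m+1) ≤ X^2 := pow_le_pow_of_le_one hX0 hX1 (by omega)
      have u2 : X^2 ≤ ε^2 := by
        have := mul_le_mul hxε.le hxε.le hX0 hε0.le
        linarith only [this]
      have u3 : X^(m+1) * X^(m+1) ≤ X^(m+1) * ε^2 :=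
        mul_le_mul_of_nonneg_left (by linarith) hXp1
      have u4 := mul_le_mul_of_nonneg_left u3 (sq_nonneg C)
      linarith only [u4]
    have hcoefQ : Q * (ε + 4*C*ε + C^2*ε^2) ≤ 3/2 := by
      rw [hQ2]
      have hprod : (ε * C * 2^m) * (ε * C) ≤ (1/4096) * (1/4096) :=
        mul_le_mul he2' he3' (mul_nonneg hε0.le hC.le) (by norm_num)
      linarith only [he1', he2', hprod]
    have main2 : (Y + C * X^(m+1))^2 ≤
        X^2 - 2*(x.re * (x^m).re + x.im * (x^m).im) + (ε + 4*C*ε + C^2*ε^2) * X^(m+1) := by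
      linarith only [hYsq, s3, s4, s5]
    have s0Q := mul_le_mul_of_nonneg_right s0 hQpos.le
    have mainQ := mul_le_mul_of_nonneg_right main2 hQpos.le
    have hcoefX := mul_le_mul_of_nonneg_right hcoefQ hXp1
    have hsq : (‖g x‖)^2 * Q ≤ X^2 * Q := by
      linarith only [s0Q, mainQ, hk1, hcoefX]
    have hsq2 : (‖g x‖)^2 ≤ X^2 := le_of_mul_le_mul_right hsq hQpos
    exact le_of_pow_le_pow_left₀ two_ne_zero hX0 hsq2
  exact ⟨hgRe, habsle, lt_of_le_of_lt habsle hxε, hgl, hgu⟩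
end

section
/- Let m ≥ 2 and let {x_j} ⊆ ℂ∖{0} be a sequence with x_{j+1} = x_j − x_j^{m} + O(x_j^{m+1}) (i.e. |x_{j+1} − x_j + x_j^m| ≤ C|x_j|^{m+1}), contained in a sector where |x_{j+1}| ≤ |x_j| and Re(x_j^{m−1}) ≥ c|x_j|^{m−1} for fixed c > 0. If x₀ is small enough then lim_{j→∞} (m−1)·j·x_j^{m−1} = 1, and there is C' > 0 with |x_j|^{m−1} ≤ C'·|x₀|^{m−1}/(1 + j·|x₀|^{m−1}) for all j ≥ 0. -/
open Filter Finset

lemma binom_bound (k : ℕ) : ∀ w : ℂ, ‖w‖ ≤ 1 →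
    ‖1 - (1-w)^k - k*w‖ ≤ (2^k : ℝ) * ‖w‖^2 := by
  have H : ∀ k : ℕ, ∀ w : ℂ, ‖w‖ ≤ 1 →
      ‖1 - (1-w)^k - k*w‖ ≤ ((2^k : ℝ) - k - 1) * ‖w‖^2 := by
    intro k
    induction k with
    | zero => intro w hw; simp
    | succ k ih =>
      intro w hw
      push_cast
      have hid : (1:ℂ) - (1-w)^(k+1) - ((k:ℂ)+1)*w
          = (1 - (1-w)^k - k*w)*(1-w) - k*w^2 := by
        ring
      rw [hid]
      have h1 : ‖(1 - (1-w)^k - (k:ℂ)*w)*(1-w)‖ ≤ ((2^k : ℝ) - k - 1) * ‖w‖^2 * 2 := by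
        rw [norm_mul]
        have h2 : ‖(1:ℂ) - w‖ ≤ 2 := by
          calc ‖(1:ℂ) - w‖ ≤ ‖(1:ℂ)‖ + ‖w‖ := norm_sub_le _ _
          _ ≤ 2 := by rw [norm_one]; linarith
        have h3 := ih w hw
        have h4 : (0:ℝ) ≤ (2^k : ℝ) - k - 1 := by
          have := Nat.lt_two_pow_self (n := k)
          have : (k:ℝ) + 1 ≤ 2^k := by exact_mod_cast this
          linarith
        calc ‖1 - (1-w)^k - (k:ℂ)*w‖ * ‖1-w‖ ≤ (((2^k : ℝ) - k - 1) * ‖w‖^2) * 2 := by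
              apply mul_le_mul h3 h2 (norm_nonneg _)
              positivity
        _ = ((2^k : ℝ) - k - 1) * ‖w‖^2 * 2 := by ring
      calc ‖(1 - (1-w)^k - (k:ℂ)*w)*(1-w) - k*w^2‖
          ≤ ‖(1 - (1-w)^k - (k:ℂ)*w)*(1-w)‖ + ‖(k:ℂ)*w^2‖ := norm_sub_le _ _
        _ ≤ ((2^k : ℝ) - k - 1) * ‖w‖^2 * 2 + k * ‖w‖^2 := by
            apply add_le_add h1
            rw [norm_mul, norm_pow]
            simp
        _ = ((2^(k+1) : ℝ) - ((k:ℝ)+1) - 1) * ‖w‖^2 := by push_cast; ring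
  intro w hw
  refine (H k w hw).trans ?_
  have : (0:ℝ) ≤ ‖w‖^2 := by positivity
  nlinarith [this]

lemma keyLemma (k : ℕ) (hk : 1 ≤ k) (C : ℝ) (hC : 0 < C) :
    ∃ K : ℝ, 1 ≤ K ∧ ∀ a b : ℂ, a ≠ 0 → b ≠ 0 →
      ‖a‖ ≤ 1 → ‖a‖ ≤ 1/(2*(1+C)) →
      ‖b - a + a^(k+1)‖ ≤ C * ‖a‖^(k+2) →
      ‖((k:ℂ)*b^k)⁻¹ - ((k:ℂ)*a^k)⁻¹ - 1‖ ≤ K * ‖a‖ := by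
  set K₃ : ℝ := k*C + 2^k*(1+C)^2 + k*(1+C)*(k + 2^k*(1+C)) with hK₃
  have hK₃pos : 0 < K₃ := by positivity
  refine ⟨K₃ * 2^k / k + 1, by have : (0:ℝ) ≤ K₃ * 2^k / k := by positivity
                               linarith, ?_⟩
  intro a b ha hb ha1 ha2 he
  have hkR : (0:ℝ) < k := by exact_mod_cast hk
  have hkC : (k:ℂ) ≠ 0 := by exact_mod_cast hkR.ne'
  set w : ℂ := 1 - b/a with hwdef
  have hbw : b = a * (1 - w) := by rw [hwdef, mul_sub, mul_one, mul_sub, mul_one, mul_div_assoc', mul_div_cancel_left₀ b ha]; ring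
  have hweq : a^k - (b - a + a^(k+1))/a = w := by
    field_simp [hwdef]; rw [hbw]; ring
  have hA1 : ‖a‖^(k+1) ≤ ‖a‖^k := pow_le_pow_of_le_one (norm_nonneg _) ha1 (by omega)
  have hAk1 : ‖a‖^k ≤ ‖a‖ := by
    calc ‖a‖^k ≤ ‖a‖^1 := pow_le_pow_of_le_one (norm_nonneg _) ha1 hk
    _ = ‖a‖ := pow_one _
  have hA2k : ‖a‖^(2*k) ≤ ‖a‖^(k+1) := pow_le_pow_of_le_one (norm_nonneg _) ha1 (by omega)
  have heoa : ‖a^k - w‖ ≤ C * ‖a‖^(k+1) := by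
    rw [← hweq]
    have : a^k - (a^k - (b - a + a^(k+1))/a) = (b - a + a^(k+1))/a := by ring
    rw [this, norm_div]
    rw [div_le_iff₀ (norm_pos_iff.2 ha)]
    calc ‖b - a + a^(k+1)‖ ≤ C * ‖a‖^(k+2) := he
    _ = C * ‖a‖^(k+1) * ‖a‖ := by ring
  have hw1 : ‖w‖ ≤ (1+C) * ‖a‖^k := by
    have : w = a^k - (a^k - w) := by ring
    rw [this]
    calc ‖a^k - (a^k - w)‖ ≤ ‖a^k‖ + ‖a^k - w‖ := norm_sub_le _ _
    _ ≤ ‖a‖^k + C*‖a‖^(k+1) := by rw [norm_pow]; linarith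
    _ ≤ (1+C) * ‖a‖^k := by nlinarith
  have hwhalf : ‖w‖ ≤ 1/2 := by
    calc ‖w‖ ≤ (1+C)*‖a‖^k := hw1
    _ ≤ (1+C)*‖a‖ := by nlinarith
    _ ≤ 1/2 := by
        rw [le_div_iff₀ (by positivity : (0:ℝ) < 2*(1+C))] at ha2
        nlinarith
  have hw1le : ‖w‖ ≤ 1 := hwhalf.trans (by norm_num)
  have h1wnorm : (1:ℝ)/2 ≤ ‖1 - w‖ := by
    have := norm_sub_norm_le (1:ℂ) w
    rw [norm_one] at this
    linarith
  have h1w : (1:ℂ) - w ≠ 0 := by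
    intro h
    rw [h, norm_zero] at h1wnorm; linarith
  set f : ℂ := 1 - (1-w)^k - k*w with hfdef
  have hfb : ‖f‖ ≤ (2^k:ℝ) * ‖w‖^2 := binom_bound k w hw1le
  have hak : a^k ≠ 0 := pow_ne_zero _ ha
  have h1wk : ((1:ℂ)-w)^k ≠ 0 := pow_ne_zero _ h1w
  -- the algebraic identity
  have hid : ((k:ℂ)*b^k)⁻¹ - ((k:ℂ)*a^k)⁻¹ - 1
      = (-(k:ℂ)*(a^k - w) + f + (k:ℂ)*a^k*((k:ℂ)*w + f)) / ((k:ℂ)*a^k*(1-w)^k) := by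
    rw [hbw, mul_pow, hfdef]
    field_simp
    ring
  rw [hid, norm_div]
  have hden : (k:ℝ) * ‖a‖^k * (1/2)^k ≤ ‖(k:ℂ)*a^k*(1-w)^k‖ := by
    rw [norm_mul, norm_mul, norm_pow, norm_pow, Complex.norm_natCast]
    gcongr
  have hnum : ‖-(k:ℂ)*(a^k - w) + f + (k:ℂ)*a^k*((k:ℂ)*w + f)‖ ≤ K₃ * ‖a‖^(k+1) := by
    have t1 : ‖-(k:ℂ)*(a^k - w)‖ ≤ (k:ℝ) * (C * ‖a‖^(k+1)) := by
      rw [norm_mul, norm_neg, Complex.norm_natCast]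
      gcongr
    have hw2 : ‖w‖^2 ≤ (1+C)^2 * ‖a‖^(2*k) := by
      have : ‖w‖^2 ≤ ((1+C)*‖a‖^k)^2 := by
        apply pow_le_pow_left₀ (norm_nonneg _) hw1
      calc ‖w‖^2 ≤ ((1+C)*‖a‖^k)^2 := this
      _ = (1+C)^2 * ‖a‖^(2*k) := by rw [mul_pow, ← pow_mul, mul_comm k 2]
    have t2 : ‖f‖ ≤ (2^k:ℝ) * (1+C)^2 * ‖a‖^(k+1) := by
      calc ‖f‖ ≤ (2^k:ℝ)*‖w‖^2 := hfb
      _ ≤ (2^k:ℝ)*((1+C)^2 * ‖a‖^(2*k)) := by gcongr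
      _ ≤ (2^k:ℝ)*((1+C)^2 * ‖a‖^(k+1)) := by gcongr
      _ = (2^k:ℝ)*(1+C)^2 * ‖a‖^(k+1) := by ring
    have t3 : ‖(k:ℂ)*a^k*((k:ℂ)*w + f)‖ ≤ (k:ℝ)*(1+C)*(k + 2^k*(1+C)) * ‖a‖^(k+1) := by
      rw [norm_mul, norm_mul, Complex.norm_natCast, norm_pow]
      have hkwf : ‖(k:ℂ)*w + f‖ ≤ (1+C)*(k + 2^k*(1+C)) * ‖a‖^k := by
        calc ‖(k:ℂ)*w + f‖ ≤ ‖(k:ℂ)*w‖ + ‖f‖ := norm_add_le _ _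
        _ ≤ (k:ℝ)*((1+C)*‖a‖^k) + (2^k:ℝ)*((1+C)^2*‖a‖^(2*k)) := by
            rw [norm_mul, Complex.norm_natCast]
            refine add_le_add (by gcongr) (hfb.trans (by gcongr))
        _ ≤ (k:ℝ)*((1+C)*‖a‖^k) + (2^k:ℝ)*((1+C)^2*‖a‖^k) := by
            have h2k : ‖a‖^(2*k) ≤ ‖a‖^k := hA2k.trans hA1
            gcongr
        _ = (1+C)*(k + 2^k*(1+C)) * ‖a‖^k := by ring
      calc (k:ℝ) * ‖a‖^k * ‖(k:ℂ)*w + f‖ ≤ (k:ℝ) * ‖a‖^k * ((1+C)*(k + 2^k*(1+C)) * ‖a‖^k) := by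
            gcongr
      _ = (k:ℝ)*(1+C)*(k + 2^k*(1+C)) * (‖a‖^k * ‖a‖^k) := by ring
      _ ≤ (k:ℝ)*(1+C)*(k + 2^k*(1+C)) * ‖a‖^(k+1) := by
          have h2 : ‖a‖^k * ‖a‖^k ≤ ‖a‖^(k+1) := by
            rw [← pow_add]
            have hkk : k + k = 2*k := (two_mul k).symm
            rw [hkk]; exact hA2k
          gcongr
    calc ‖-(k:ℂ)*(a^k - w) + f + (k:ℂ)*a^k*((k:ℂ)*w + f)‖
        ≤ ‖-(k:ℂ)*(a^k - w) + f‖ + ‖(k:ℂ)*a^k*((k:ℂ)*w + f)‖ := norm_add_le _ _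
      _ ≤ (‖-(k:ℂ)*(a^k - w)‖ + ‖f‖) + ‖(k:ℂ)*a^k*((k:ℂ)*w + f)‖ := by
          gcongr; exact norm_add_le _ _
      _ ≤ ((k:ℝ)*(C*‖a‖^(k+1)) + (2^k:ℝ)*(1+C)^2*‖a‖^(k+1)) + (k:ℝ)*(1+C)*(k + 2^k*(1+C))*‖a‖^(k+1) := by
          gcongr
      _ = K₃ * ‖a‖^(k+1) := by rw [hK₃]; ring
  have hdenpos : (0:ℝ) < (k:ℝ) * ‖a‖^k * (1/2)^k := by
    have : (0:ℝ) < ‖a‖ := norm_pos_iff.2 ha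
    positivity
  have hmain := div_le_div₀ (by positivity) hnum hdenpos hden
  have hanorm : (0:ℝ) < ‖a‖ := norm_pos_iff.2 ha
  refine hmain.trans ?_
  rw [div_le_iff₀ hdenpos, pow_succ]
  have h2k : (2:ℝ)^k * (1/2)^k = 1 := by rw [← mul_pow]; norm_num
  have e1 : (K₃*2^k/k + 1) * (k:ℝ) = K₃*2^k + k := by field_simp
  have key2 : (K₃*2^k/k+1)*‖a‖*((k:ℝ)*‖a‖^k*(1/2)^k)
      = K₃*(‖a‖^k*‖a‖) + (k:ℝ)*(1/2)^k*(‖a‖^k*‖a‖) := by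
    calc (K₃*2^k/k+1)*‖a‖*((k:ℝ)*‖a‖^k*(1/2)^k)
        = ((K₃*2^k/k+1)*(k:ℝ))*((1/2)^k*(‖a‖*‖a‖^k)) := by ring
      _ = (K₃*2^k + k)*((1/2)^k*(‖a‖*‖a‖^k)) := by rw [e1]
      _ = K₃*((2:ℝ)^k*(1/2)^k)*(‖a‖^k*‖a‖) + (k:ℝ)*(1/2)^k*(‖a‖^k*‖a‖) := by ring
      _ = K₃*(‖a‖^k*‖a‖) + (k:ℝ)*(1/2)^k*(‖a‖^k*‖a‖) := by rw [h2k]; ring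
  rw [key2]
  have : (0:ℝ) ≤ (k:ℝ)*(1/2)^k*(‖a‖^k*‖a‖) := by positivity
  linarith

/-- Leau–Fatou orbit asymptotics: for orbits `x_{j+1} = x_j − x_j^m + O(x_j^{m+1})` with
nonincreasing modulus and `Re(x_j^{m−1}) ≥ c|x_j|^{m−1}`, if `x₀` is small enough then
`(m−1)·j·x_j^{m−1} → 1` and `|x_j|^{m−1} ≤ C'|x₀|^{m−1}/(1 + j|x₀|^{m−1})`. -/
theorem stmt14 (m : ℕ) (hm : 2 ≤ m) (c C : ℝ) (hc : 0 < c) (hC : 0 < C) :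
    ∃ δ > 0, ∃ C' > 0, ∀ x : ℕ → ℂ,
      (∀ j, x j ≠ 0) →
      (∀ j, ‖x (j + 1) - x j + (x j) ^ m‖ ≤ C * ‖x j‖ ^ (m + 1)) →
      (∀ j, ‖x (j + 1)‖ ≤ ‖x j‖) →
      (∀ j, c * ‖x j‖ ^ (m - 1) ≤ ((x j) ^ (m - 1)).re) →
      ‖x 0‖ < δ →
      Filter.Tendsto (fun j : ℕ => ((m : ℂ) - 1) * (j : ℂ) * (x j) ^ (m - 1))
        Filter.atTop (nhds 1) ∧
      ∀ j : ℕ, ‖x j‖ ^ (m - 1) ≤ C' * ‖x 0‖ ^ (m - 1) / (1 + j * ‖x 0‖ ^ (m - 1)) := by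
  set k := m - 1 with hkdef
  have hk1 : 1 ≤ k := by omega
  have hmk : m = k + 1 := by omega
  have hkR : (0:ℝ) < k := by exact_mod_cast hk1
  obtain ⟨K, hK1, hKey⟩ := keyLemma k hk1 C hC
  have hKpos : (0:ℝ) < K := lt_of_lt_of_le one_pos hK1
  refine ⟨min (min 1 (1/(2*(1+C)))) (1/(2*K)),
    lt_min (lt_min one_pos (by positivity)) (by positivity), 1/c + 2, by positivity, ?_⟩
  intro x hxne hrec hmono hre hx0
  -- monotonicity of norms
  have hxmono : ∀ j, ‖x j‖ ≤ ‖x 0‖ := by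
    intro j
    induction j with
    | zero => exact le_refl _
    | succ j ih => exact (hmono j).trans ih
  have hxδ : ∀ j, ‖x j‖ < min (min 1 (1/(2*(1+C)))) (1/(2*K)) :=
    fun j => lt_of_le_of_lt (hxmono j) hx0
  have hx1 : ∀ j, ‖x j‖ ≤ 1 :=
    fun j => ((hxδ j).trans_le ((min_le_left _ _).trans (min_le_left _ _))).le
  have hx2 : ∀ j, ‖x j‖ ≤ 1/(2*(1+C)) :=
    fun j => ((hxδ j).trans_le ((min_le_left _ _).trans (min_le_right _ _))).le
  have hx3 : ∀ j, ‖x j‖ ≤ 1/(2*K) :=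
    fun j => ((hxδ j).trans_le (min_le_right _ _)).le
  set u : ℕ → ℂ := fun j => ((k:ℂ) * (x j)^k)⁻¹ with hu
  have hkC0 : (k:ℂ) ≠ 0 := by exact_mod_cast hkR.ne'
  have hxk0 : ∀ j, (x j)^k ≠ 0 := fun j => pow_ne_zero _ (hxne j)
  have hune : ∀ j, u j ≠ 0 := fun j => inv_ne_zero (mul_ne_zero hkC0 (hxk0 j))
  have hrec' : ∀ j, ‖x (j+1) - x j + (x j)^(k+1)‖ ≤ C * ‖x j‖^(k+2) := by
    intro j
    have h := hrec j
    rw [hmk] at h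
    exact h
  have hF2 : ∀ j, ‖u (j+1) - u j - 1‖ ≤ K * ‖x j‖ :=
    fun j => hKey (x j) (x (j+1)) (hxne j) (hxne (j+1)) (hx1 j) (hx2 j) (hrec' j)
  have hF2' : ∀ j, ‖u (j+1) - u j - 1‖ ≤ 1/2 := by
    intro j
    refine (hF2 j).trans ?_
    calc K * ‖x j‖ ≤ K * (1/(2*K)) := by gcongr; exact hx3 j
    _ = 1/2 := by field_simp
  have hre' : ∀ j, c * ‖x j‖^k ≤ ((x j)^k).re := fun j => hre j
  have hnormu : ∀ j, ‖u j‖ = ((k:ℝ) * ‖x j‖^k)⁻¹ := by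
    intro j
    rw [hu]
    rw [norm_inv, norm_mul, norm_pow, Complex.norm_natCast]
  have htpos : ∀ j, (0:ℝ) < ‖x j‖^k := fun j => pow_pos (norm_pos_iff.2 (hxne j)) k
  have hF3 : ∀ j, c / ((k:ℝ) * ‖x j‖^k) ≤ (u j).re := by
    intro j
    have hz : u j = ((k:ℂ)*(x j)^k)⁻¹ := rfl
    rw [hz, Complex.inv_re]
    have hre1 : ((k:ℂ)*(x j)^k).re = (k:ℝ) * ((x j)^k).re := by
      simp [Complex.mul_re]
    have hns : Complex.normSq ((k:ℂ)*(x j)^k) = ((k:ℝ)*‖x j‖^k)^2 := by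
      rw [Complex.normSq_eq_norm_sq, norm_mul, norm_pow,
        Complex.norm_natCast]
    rw [hre1, hns]
    have h1 := hre' j
    have ht := htpos j
    rw [div_le_div_iff₀ (by positivity) (by positivity)]
    nlinarith [ht, hkR, h1]
  have hu0pos : 0 < (u 0).re :=
    lt_of_lt_of_le (div_pos hc (mul_pos hkR (htpos 0))) (hF3 0)
  have hF4 : ∀ j : ℕ, (u 0).re + j/2 ≤ (u j).re := by
    intro j
    induction j with
    | zero => simp
    | succ j ih =>
      have h := hF2' j
      have h1 : |(u (j+1) - u j - 1).re| ≤ 1/2 := by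
        refine le_trans ?_ h
        exact Complex.abs_re_le_norm _
      have h2 : (u (j+1) - u j - 1).re = (u (j+1)).re - (u j).re - 1 := by simp
      rw [h2] at h1
      have h3 := (abs_le.mp h1).1
      push_cast
      linarith
  have hupos : ∀ j : ℕ, 0 < (u j).re := by
    intro j
    refine lt_of_lt_of_le ?_ (hF4 j)
    have : (0:ℝ) ≤ (j:ℝ)/2 := by positivity
    linarith
  have hF5 : ∀ j : ℕ, ‖x j‖^k ≤ 1/((k:ℝ) * ((u 0).re + j/2)) := by
    intro j
    have h1 : (u j).re ≤ ‖u j‖ := by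
      exact Complex.re_le_norm _
    rw [hnormu j] at h1
    have ht := htpos j
    have hpos : (0:ℝ) < (k:ℝ) * ‖x j‖^k := by positivity
    have h4 : (u j).re * ((k:ℝ)*‖x j‖^k) ≤ 1 := by
      have := mul_le_mul_of_nonneg_right h1 hpos.le
      rwa [inv_mul_cancel₀ hpos.ne'] at this
    have h2 := hF4 j
    have h3 : (0:ℝ) < (u 0).re + (j:ℝ)/2 := by positivity
    rw [le_div_iff₀ (by positivity)]
    nlinarith [h4, h2, ht, hkR, hupos j]
  constructor
  · -- Tendsto part
    have hd : Tendsto (fun j:ℕ => (k:ℝ)*((u 0).re + j/2)) atTop atTop := by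
      apply Tendsto.const_mul_atTop hkR
      apply tendsto_atTop_add_const_left
      exact (tendsto_natCast_atTop_atTop).atTop_div_const two_pos
    have hinv : Tendsto (fun j:ℕ => ((k:ℝ)*((u 0).re + j/2))⁻¹) atTop (nhds 0) :=
      hd.inv_tendsto_atTop
    have hF5' : ∀ j : ℕ, ‖x j‖^k ≤ ((k:ℝ)*((u 0).re + j/2))⁻¹ := by
      intro j; rw [← one_div]; exact hF5 j
    have hxk : Tendsto (fun j => ‖x j‖^k) atTop (nhds 0) :=
      tendsto_of_tendsto_of_tendsto_of_le_of_le tendsto_const_nhds hinv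
        (fun j => (htpos j).le) hF5'
    have hxto0 : Tendsto (fun j => ‖x j‖) atTop (nhds 0) := by
      have h := hxk.rpow_const (p := (k:ℝ)⁻¹) (Or.inr (by positivity))
      rw [Real.zero_rpow (by positivity : ((k:ℝ)⁻¹) ≠ 0)] at h
      refine h.congr fun j => ?_
      exact Real.pow_rpow_inv_natCast (norm_nonneg _) (by omega)
    have hεto0 : Tendsto (fun j => u (j+1) - u j - 1) atTop (nhds 0) := by
      rw [tendsto_zero_iff_norm_tendsto_zero]
      refine tendsto_of_tendsto_of_tendsto_of_le_of_le tendsto_const_nhds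
        ?_ (fun j => norm_nonneg _) hF2
      simpa using hxto0.const_mul K
    have hces := hεto0.cesaro_smul
    have hsum : ∀ n : ℕ, ∑ i ∈ range n, (u (i+1) - u i - 1) = u n - u 0 - n := by
      intro n
      induction n with
      | zero => simp
      | succ n ih =>
        rw [Finset.sum_range_succ, ih]
        push_cast
        ring
    have ha0 : Tendsto (fun n:ℕ => (n⁻¹:ℝ) • (u 0)) atTop (nhds 0) := by
      have h1 : Tendsto (fun n:ℕ => ((n:ℝ))⁻¹) atTop (nhds 0) :=
        tendsto_inv_atTop_zero.comp (tendsto_natCast_atTop_atTop (R := ℝ))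
      have h := h1.smul_const (u 0)
      simpa using h
    have hone : Tendsto (fun n:ℕ => (n⁻¹:ℝ) • (n:ℂ)) atTop (nhds 1) := by
      refine tendsto_const_nhds.congr' ?_
      filter_upwards [eventually_ge_atTop 1] with n hn
      have hn0 : (n:ℝ) ≠ 0 := by positivity
      rw [Complex.real_smul]
      push_cast
      rw [inv_mul_cancel₀ (by exact_mod_cast hn0)]
    have h1n : Tendsto (fun n:ℕ => (n⁻¹:ℝ) • u n) atTop (nhds 1) := by
      have hcomb := (hces.add ha0).add hone
      rw [add_zero, zero_add] at hcomb
      refine hcomb.congr fun n => ?_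
      rw [hsum n]
      rw [← smul_add, ← smul_add]
      congr 1
      ring
    have hfin : Tendsto (fun n:ℕ => ((n⁻¹:ℝ) • u n)⁻¹) atTop (nhds 1) := by
      have := h1n.inv₀ one_ne_zero
      simpa using this
    have hmC : (m:ℂ) = (k:ℂ) + 1 := by rw [hmk]; push_cast; ring
    refine hfin.congr fun n => ?_
    have h1 : ((n:ℕ) : ℝ)⁻¹ • u n = ((n:ℝ) : ℂ)⁻¹ * u n := by
      rw [Complex.real_smul, Complex.ofReal_inv]
    have h2 : (u n)⁻¹ = (k:ℂ) * x n ^ k := by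
      simp only [hu]
      rw [inv_inv]
    rw [h1, mul_inv_rev, inv_inv, inv_inv, hmC]
    push_cast
    ring
  · -- Bound part
    intro j
    set t0 := ‖x 0‖^k with ht0def
    have ht0 : 0 < t0 := htpos 0
    have h1 : c/((k:ℝ)*t0) ≤ (u 0).re := hF3 0
    have h2 := hF5 j
    have h3 : (0:ℝ) < c/((k:ℝ)*t0) + (j:ℝ)/2 := by positivity
    have h4 : ‖x j‖^k ≤ 1/((k:ℝ)*(c/((k:ℝ)*t0) + j/2)) := by
      refine h2.trans ?_
      apply one_div_le_one_div_of_le (by positivity)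
      have : (0:ℝ) ≤ (j:ℝ)/2 := by positivity
      gcongr
    refine h4.trans ?_
    have h5 : (0:ℝ) < 1 + (j:ℝ)*t0 := by positivity
    rw [div_le_div_iff₀ (by positivity) h5]
    have hc1 : t0*(c/t0) = c := by field_simp
    have hc2 : (1/c)*c = 1 := by field_simp
    have hc3 : (k:ℝ)*(c/((k:ℝ)*t0)) = c/t0 := by field_simp
    have hjt : (0:ℝ) ≤ (j:ℝ)*t0 := by positivity
    have hk1R : (1:ℝ) ≤ (k:ℝ) := by exact_mod_cast hk1
    have h7 : (0:ℝ) ≤ (j:ℝ)*t0*((1/c+2)*(k:ℝ)/2 - 1) := by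
      apply mul_nonneg hjt
      have hcinv : (0:ℝ) < 1/c := by positivity
      nlinarith [hk1R, hcinv]
    have e2 : (k:ℝ)*(c/((k:ℝ)*t0) + (j:ℝ)/2) = c/t0 + (k:ℝ)*(j:ℝ)/2 := by
      field_simp
    rw [e2]
    have e3 : (1/c+2)*t0*(c/t0 + (k:ℝ)*(j:ℝ)/2)
        = (1 + 2*c) + (1/c+2)*((k:ℝ)*((j:ℝ)*t0))/2 := by
      field_simp
    rw [e3]
    have h8 : (1/c+2)*((k:ℝ)*((j:ℝ)*t0))/2
        = (j:ℝ)*t0*((1/c+2)*(k:ℝ)/2 - 1) + (j:ℝ)*t0 := by ring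
    linarith [h7, hc.le, h8]
end
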